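/- arXiv:1205.1556 — 4 statements merged into one kernel-verified Lean document; each statement's English description precedes it below -/
import Mathlib

section
/- Let v > 3√2/4, a > 0, b > 0, c ≥ 0, and define F : (0, π/2) → ℝ by F(x) = a·(1 − v·sin x)/cos x + b·(1 − v·cos x)/sin x + c. Then F attains no local minimum in (0, π/2); equivalently, for every x₀ ∈ (0, π/2) there exist points arbitrarily close to x₀ where F takes strictly smaller values, unless x₀ is the unique global maximizer. -/
open Real Filter Set Topology

lemma psi_neg (v t r : ℝ) (hr2 : r^2 = 2) (hr1 : 1 < r) (ht1 : 1 < t)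
    (htr : t ≤ r) (hv : 3 * r / 4 < v) :
    v*t*(3 + t^2) - 3*t^2 + 3 - 4*v^2 < 0 := by
  have hv1 : 1 < v := by nlinarith
  have ht0 : (0:ℝ) < t := by linarith
  have h2 : 0 ≤ v*(5 + r*t + t^2) - 3*(r + t) := by
    nlinarith [sq_nonneg (t - 1), mul_pos (by linarith : (0:ℝ) < r) ht0]
  have h3 : 0 ≤ (r - t)*(v*(5 + r*t + t^2) - 3*(r + t)) :=
    mul_nonneg (by linarith) h2
  have h5 : 0 < (4*v - 3*r)*(2*v - r) :=
    mul_pos (by linarith) (by nlinarith)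
  nlinarith [h3, h5, hr2]

lemma key_ineq (v s c : ℝ) (hs : 0 < s) (hc : 0 < c) (hsc : s^2 + c^2 = 1)
    (hv : 3 * Real.sqrt 2 / 4 < v) :
    s*(v - c)*(1 + s^2 - 2*v*s) + c*(v - s)*(1 + c^2 - 2*v*c) < 0 := by
  have hr2 : (Real.sqrt 2)^2 = 2 := Real.sq_sqrt (by norm_num)
  have hr1 : 1 < Real.sqrt 2 := by nlinarith [Real.sqrt_nonneg 2]
  have ht2 : (s+c)^2 ≤ 2 := by nlinarith [sq_nonneg (s - c)]
  have ht1 : 1 < s + c := by nlinarith [mul_pos hs hc]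
  have htr : s + c ≤ Real.sqrt 2 := by nlinarith [Real.sqrt_nonneg 2]
  have hpsi := psi_neg v (s+c) (Real.sqrt 2) hr2 hr1 ht1 htr hv
  have hL : s*(v - c)*(1 + s^2 - 2*v*s) + c*(v - s)*(1 + c^2 - 2*v*c)
      = (v*(s+c)*(3 + (s+c)^2) - 3*(s+c)^2 + 3 - 4*v^2)/2 := by
    linear_combination (3/2 - 2*v^2 + v*c/2 + v*s/2 - s*c) * hsc
  linarith

lemma hasDerivAt_Fterm (v a b k x : ℝ) (hs : sin x ≠ 0) (hc : cos x ≠ 0) :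
    HasDerivAt (fun y => a * (1 - v * sin y) / cos y + b * (1 - v * cos y) / sin y + k)
      (a * (sin x - v) / cos x ^ 2 + b * (v - cos x) / sin x ^ 2) x := by
  have hp := sin_sq_add_cos_sq x
  have h1 : HasDerivAt (fun y => a * (1 - v * sin y) / cos y)
      (a * (sin x - v) / cos x ^ 2) x := by
    have := ((((hasDerivAt_sin x).const_mul v).const_sub 1).const_mul a).div
      (hasDerivAt_cos x) hc
    refine this.congr_deriv ?_
    symm
    field_simp
    ring_nf
    linear_combination (a*v) * hp
  have h2 : HasDerivAt (fun y => b * (1 - v * cos y) / sin y)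
      (b * (v - cos x) / sin x ^ 2) x := by
    have := ((((hasDerivAt_cos x).const_mul v).const_sub 1).const_mul b).div
      (hasDerivAt_sin x) hs
    refine this.congr_deriv ?_
    symm
    field_simp
    ring_nf
    linear_combination (-b*v) * hp
  exact (h1.add h2).add_const k

lemma hasDerivAt_Fderiv (v a b x : ℝ) (hs : sin x ≠ 0) (hc : cos x ≠ 0) :
    HasDerivAt (fun y => a * (sin y - v) / cos y ^ 2 + b * (v - cos y) / sin y ^ 2)
      (a * (1 + sin x ^ 2 - 2 * v * sin x) / cos x ^ 3
        + b * (1 + cos x ^ 2 - 2 * v * cos x) / sin x ^ 3) x := by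
  have hp := sin_sq_add_cos_sq x
  have h1 : HasDerivAt (fun y => a * (sin y - v) / cos y ^ 2)
      (a * (1 + sin x ^ 2 - 2 * v * sin x) / cos x ^ 3) x := by
    have := (((hasDerivAt_sin x).sub_const v).const_mul a).div
      ((hasDerivAt_cos x).pow 2) (pow_ne_zero 2 hc)
    refine this.congr_deriv ?_
    symm
    simp only [Pi.pow_apply]
    field_simp
    linear_combination (-(a * cos x)) * hp
  have h2 : HasDerivAt (fun y => b * (v - cos y) / sin y ^ 2)
      (b * (1 + cos x ^ 2 - 2 * v * cos x) / sin x ^ 3) x := by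
    have := (((hasDerivAt_cos x).const_sub v).const_mul b).div
      ((hasDerivAt_sin x).pow 2) (pow_ne_zero 2 hs)
    refine this.congr_deriv ?_
    symm
    simp only [Pi.pow_apply]
    field_simp
    linear_combination (-(b * sin x)) * hp
  exact h1.add h2

theorem F_no_local_min (v a b c : ℝ) (hv : 3 * Real.sqrt 2 / 4 < v)
    (ha : 0 < a) (hb : 0 < b) (hc : 0 ≤ c) :
    ¬ ∃ x ∈ Set.Ioo 0 (π/2), IsLocalMin
      (fun x => a * (1 - v * sin x) / cos x + b * (1 - v * cos x) / sin x + c)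
      x := by
  rintro ⟨x, ⟨hx0, hx2⟩, hmin⟩
  have hpi : (0:ℝ) < π := pi_pos
  have hsx : 0 < sin x := sin_pos_of_pos_of_lt_pi hx0 (by linarith)
  have hcx : 0 < cos x := cos_pos_of_mem_Ioo ⟨by linarith, hx2⟩
  have hv1 : 1 < v := by
    have h43 : (4:ℝ)/3 < Real.sqrt 2 := by
      nlinarith [Real.sq_sqrt (by norm_num : (0:ℝ) ≤ 2), Real.sqrt_nonneg 2]
    linarith
  -- the function, its derivative, and second derivative
  set F : ℝ → ℝ := fun y => a * (1 - v * sin y) / cos y + b * (1 - v * cos y) / sin y + c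
    with hFdef
  set F' : ℝ → ℝ := fun y => a * (sin y - v) / cos y ^ 2 + b * (v - cos y) / sin y ^ 2
    with hF'def
  -- F' vanishes at x
  have hdF : HasDerivAt F (F' x) x := hasDerivAt_Fterm v a b c x hsx.ne' hcx.ne'
  have hcrit : F' x = 0 := by
    have := hmin.deriv_eq_zero
    rwa [hdF.deriv] at this
  -- second derivative is negative at x
  have hsecond : a * (1 + sin x ^ 2 - 2 * v * sin x) / cos x ^ 3
      + b * (1 + cos x ^ 2 - 2 * v * cos x) / sin x ^ 3 < 0 := by
    have hcrit' : a * (sin x - v) * sin x ^ 2 + b * (v - cos x) * cos x ^ 2 = 0 := by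
      have := hcrit
      rw [hF'def] at this
      field_simp at this
      linarith [this]
    have hkey := key_ineq v (sin x) (cos x) hsx hcx (sin_sq_add_cos_sq x) hv
    have hvc : 0 < v - cos x := by nlinarith [cos_le_one x]
    have hN : (v - cos x) * (a * sin x ^ 3 * (1 + sin x ^ 2 - 2 * v * sin x)
          + b * cos x ^ 3 * (1 + cos x ^ 2 - 2 * v * cos x))
        = a * sin x ^ 2 *
          (sin x*(v - cos x)*(1 + sin x^2 - 2*v*sin x)
            + cos x*(v - sin x)*(1 + cos x^2 - 2*v*cos x)) := by
      linear_combination (cos x * (1 + cos x^2 - 2*v*cos x)) * hcrit'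
    have hN2 : a * sin x ^ 3 * (1 + sin x ^ 2 - 2 * v * sin x)
        + b * cos x ^ 3 * (1 + cos x ^ 2 - 2 * v * cos x) < 0 := by
      have hr : (v - cos x) * (a * sin x ^ 3 * (1 + sin x ^ 2 - 2 * v * sin x)
          + b * cos x ^ 3 * (1 + cos x ^ 2 - 2 * v * cos x)) < 0 := by
        rw [hN]
        exact mul_neg_of_pos_of_neg (by positivity) hkey
      nlinarith [hr, hvc]
    have heq : a * (1 + sin x ^ 2 - 2 * v * sin x) / cos x ^ 3
        + b * (1 + cos x ^ 2 - 2 * v * cos x) / sin x ^ 3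
        = (a * sin x ^ 3 * (1 + sin x ^ 2 - 2 * v * sin x)
          + b * cos x ^ 3 * (1 + cos x ^ 2 - 2 * v * cos x)) / (sin x ^ 3 * cos x ^ 3) := by
      field_simp
    rw [heq]
    exact div_neg_of_neg_of_pos hN2 (by positivity)
  -- slope of F' is eventually negative to the right of x
  have hdF' : HasDerivAt F' (a * (1 + sin x ^ 2 - 2 * v * sin x) / cos x ^ 3
      + b * (1 + cos x ^ 2 - 2 * v * cos x) / sin x ^ 3) x :=
    hasDerivAt_Fderiv v a b x hsx.ne' hcx.ne'
  have hslope := hasDerivAt_iff_tendsto_slope.mp hdF'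
  have hev1 : ∀ᶠ y in 𝓝[>] x, slope F' x y < 0 := by
    have h := hslope.eventually_lt_const hsecond
    exact h.filter_mono (nhdsWithin_mono x fun y hy => LT.lt.ne' hy)
  have hev2 : ∀ᶠ y in 𝓝[>] x, y ∈ Set.Ioo (0:ℝ) (π/2) :=
    eventually_nhdsWithin_of_eventually_nhds
      (isOpen_Ioo.eventually_mem (⟨hx0, hx2⟩ : x ∈ Set.Ioo (0:ℝ) (π/2)))
  obtain ⟨u, hu, hsub⟩ := mem_nhdsGT_iff_exists_Ioo_subset.mp (hev1.and hev2)
  have hxu : x < u := hu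
  -- F' is negative on Ioo x u
  have hFneg : ∀ y ∈ Set.Ioo x u, F' y < 0 := by
    intro y hy
    obtain ⟨h1, h2⟩ := hsub hy
    have hyx : 0 < y - x := by linarith [hy.1]
    have : (F' y - F' x) / (y - x) < 0 := by
      rwa [slope_def_field] at h1
    rw [hcrit, sub_zero] at this
    have h3 := mul_neg_of_neg_of_pos this hyx
    rwa [div_mul_cancel₀ _ (ne_of_gt hyx)] at h3
  -- F is strictly decreasing on [x, u)
  have hIco : Set.Ico x u ⊆ Set.Ioo (0:ℝ) (π/2) := by
    intro y hy
    rcases eq_or_lt_of_le hy.1 with h | h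
    · exact h ▸ ⟨hx0, hx2⟩
    · exact (hsub ⟨h, hy.2⟩).2
  have hanti : StrictAntiOn F (Set.Ico x u) := by
    apply strictAntiOn_of_deriv_neg (convex_Ico x u)
    · intro y hy
      have hy' := hIco hy
      have hs' : 0 < sin y := sin_pos_of_pos_of_lt_pi hy'.1 (by linarith [hy'.2])
      have hc' : 0 < cos y := cos_pos_of_mem_Ioo ⟨by linarith [hy'.1], hy'.2⟩
      exact (hasDerivAt_Fterm v a b c y hs'.ne' hc'.ne').continuousAt.continuousWithinAt
    · intro y hy
      rw [interior_Ico] at hy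
      have hy' := hIco ⟨le_of_lt hy.1, hy.2⟩
      have hs' : 0 < sin y := sin_pos_of_pos_of_lt_pi hy'.1 (by linarith [hy'.2])
      have hc' : 0 < cos y := cos_pos_of_mem_Ioo ⟨by linarith [hy'.1], hy'.2⟩
      rw [(hasDerivAt_Fterm v a b c y hs'.ne' hc'.ne').deriv]
      exact hFneg y hy
  -- contradiction with the local minimum
  have hev3 : ∀ᶠ y in 𝓝[>] x, F x ≤ F y :=
    (hmin.filter_mono nhdsWithin_le_nhds : ∀ᶠ y in 𝓝[>] x, F x ≤ F y)
  have hev4 : ∀ᶠ y in 𝓝[>] x, y ∈ Set.Ioo x u :=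
    Ioo_mem_nhdsGT_of_mem ⟨le_refl x, hxu⟩
  obtain ⟨z, hz1, hz2⟩ := (hev3.and hev4).exists
  have : F z < F x := hanti ⟨le_refl x, hxu⟩ ⟨le_of_lt hz2.1, hz2.2⟩ hz2.1
  linarith
end

section
/- Let v > 3√2/4. Define H : (0, π/2) → ℝ by H(x) = 2(v − sin x)(v − cos x) + sin x · cos x · (1 − v(sin x + cos x)). Then H(x) > 0 for all x ∈ (0, π/2). -/
open Real

theorem H_pos (v : ℝ) (hv : 3 * Real.sqrt 2 / 4 < v) :
    ∀ x ∈ Set.Ioo 0 (π/2),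
      0 < 2 * (v - sin x) * (v - cos x) +
        sin x * cos x * (1 - v * (sin x + cos x)) := by
  intro x hx
  obtain ⟨hx0, hx2⟩ := hx
  have hs : 0 < sin x := sin_pos_of_pos_of_lt_pi hx0 (by linarith [pi_pos])
  have hc : 0 < cos x := cos_pos_of_mem_Ioo ⟨by linarith [pi_pos], hx2⟩
  set s := sin x
  set c := cos x
  have pyth : s ^ 2 + c ^ 2 = 1 := by
    exact sin_sq_add_cos_sq x
  set r := Real.sqrt 2 with hr_def
  have hr2 : r ^ 2 = 2 := Real.sq_sqrt (by norm_num)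
  have hr1 : 1 < r := by
    nlinarith [Real.sqrt_nonneg 2]
  have ht2 : s + c ≤ r := by
    nlinarith [sq_nonneg (s - c), sq_nonneg (s + c - r), Real.sqrt_nonneg 2]
  have ht1 : 1 < s + c := by
    nlinarith [mul_pos hs hc]
  have hv2 : r / 2 < v := by linarith
  have h1 : 0 < (v - 3 * r / 4) * (v - r / 2) := by
    apply mul_pos <;> linarith
  have hv1 : 1 < v := by nlinarith [Real.sqrt_nonneg 2]
  have hfac : 0 < v * ((s + c) + 1) + v * r - 3 := by nlinarith
  have h3 : 0 < ((s + c) - 1) * (v * ((s + c) + 1) + v * r - 3) :=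
    mul_pos (by linarith) hfac
  have h4 : 0 < (v - 3 * r / 4) * (6 + r) := mul_pos (by linarith) (by linarith)
  have hbr : 0 < v * ((s + c) ^ 2 + (s + c) * r + 5) - 3 * ((s + c) + r) := by
    nlinarith [h3, h4, hr2]
  have h2 : 0 ≤ (r - (s + c)) *
      (v * ((s + c) ^ 2 + (s + c) * r + 5) - 3 * ((s + c) + r)) := by
    apply mul_nonneg (by linarith) (le_of_lt hbr)
  nlinarith [h1, h2, pyth, hr2, sq_nonneg (s + c)]
end

section
/- Let v > 3√2/4. Define I : (0, π/2) → ℝ by I(x) = 2(v − sin x)(v − cos x) + sin x · cos x · (1 − √2·v). Then I(x) > 0 for all x ∈ (0, π/2). -/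
set_option maxHeartbeats 1000000
open Real
theorem I_pos (v : ℝ) (hv : 3 * Real.sqrt 2 / 4 < v) :
    ∀ x ∈ Set.Ioo 0 (π/2),
      0 < 2 * (v - sin x) * (v - cos x) +
        sin x * cos x * (1 - Real.sqrt 2 * v) := by
  intro x hx
  obtain ⟨hx1, hx2⟩ := hx
  have hs : 0 < sin x := sin_pos_of_pos_of_lt_pi hx1 (by linarith [pi_pos])
  have hc : 0 < cos x := cos_pos_of_mem_Ioo ⟨by linarith [pi_pos], hx2⟩
  have hs1 : sin x < 1 := by nlinarith [sin_sq_add_cos_sq x]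
  have hc1 : cos x < 1 := by nlinarith [sin_sq_add_cos_sq x]
  have hsc : sin x ^ 2 + cos x ^ 2 = 1 := sin_sq_add_cos_sq x
  set k := Real.sqrt 2 with hkdef
  have hk : k ^ 2 = 2 := Real.sq_sqrt (by norm_num)
  have hkp : 0 < k := Real.sqrt_pos.mpr (by norm_num)
  set s := sin x
  set c := cos x
  set t := s + c with htdef
  have hp : s * c = (t ^ 2 - 1) / 2 := by rw [htdef]; linear_combination (-1/2 : ℝ) * hsc
  have hsum : t ≤ k := by nlinarith [sq_nonneg (t - k), sq_nonneg (s - c)]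
  have ht1 : 1 < t := by nlinarith
  have hw : 0 < v - 3 * k / 4 := by linarith
  have hu : 0 ≤ k - t := by linarith
  have hk3 : k ^ 3 = 2 * k := by linear_combination k * hk
  have hkv : k ^ 2 * v = 2 * v := by linear_combination v * hk
  have hkt : k ^ 2 * t = 2 * t := by linear_combination t * hk
  have hktv : k ^ 2 * (t * v) = 2 * (t * v) := by linear_combination (t * v) * hk
  have hkt2 : k ^ 2 * t ^ 2 = 2 * t ^ 2 := by linear_combination (t ^ 2) * hk
  have hk3t : k ^ 3 * t = 2 * (k * t) := by linear_combination (k * t) * hk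
  have hA : 0 ≤ (k - t) * (v - 3 * k / 4) := mul_nonneg hu hw.le
  have hB : 0 ≤ k * ((k - t) * (v - 3 * k / 4)) := mul_nonneg hkp.le hA
  have hC : 0 ≤ k * ((k - t) * (v - 3 * k / 4) * (t - 1)) :=
    mul_nonneg hkp.le (mul_nonneg hA (by linarith))
  have hD : 0 < k * (v - 3 * k / 4) := mul_pos hkp hw
  rw [hp]
  nlinarith [hA, hB, hC, hD, sq_nonneg (v - 3 * k / 4), sq_nonneg (k - t), hk3, hkv, hkt, hktv, hkt2, hk3t]
end

section
/- Let v > 3√2/4, a > 0, b > 0. Then the equation (sin²x·(v − sin x))/(cos²x·(v − cos x)) = b/a has exactly one solution x in (0, π/2). -/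
open Real

lemma N_pos_aux (v s c : ℝ) (hv : 3 * Real.sqrt 2 / 4 < v) (hs : 0 < s) (hc : 0 < c)
    (h1 : s^2 + c^2 = 1) :
    0 < (2*v - 3*s) * (c^2*(v - c)) + (2*v - 3*c) * (s^2*(v - s)) := by
  set r := Real.sqrt 2 with hr
  have hr2 : r^2 = 2 := Real.sq_sqrt (by norm_num)
  have hr0 : 0 < r := Real.sqrt_pos.mpr (by norm_num)
  have hr3 : 2*r < 3 := by nlinarith
  have hv1 : 1 < v := by nlinarith
  have hsle : s + c ≤ r := by nlinarith [sq_nonneg (s - c)]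
  have hs1 : 1 < s + c := by nlinarith [mul_pos hs hc]
  have hkey : 0 ≤ v*((s+c)^2 + r*(s+c) + 5) - 3*(s+c) - 3*r := by
    nlinarith [mul_pos (sub_pos.mpr hs1) (show 0 < s + c + r - 2 by nlinarith)]
  have hid : 2*((2*v - 3*s) * (c^2*(v - c)) + (2*v - 3*c) * (s^2*(v - s)))
      = (4*v - 3*r)*(v - r/2)
        + (r - (s+c))*(v*((s+c)^2 + r*(s+c) + 5) - 3*(s+c) - 3*r) := by
    linear_combination (4*v^2 - 3*v*(s+c) + 3*(s+c)^2 - 6 - 3*(s^2+c^2-1)) * h1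
      + (3/2 - v*(s+c)) * hr2
  nlinarith [mul_pos (show 0 < 4*v - 3*r by nlinarith) (show 0 < v - r/2 by nlinarith),
    mul_nonneg (sub_nonneg.mpr hsle) hkey]

theorem G_eq_unique_solution (v a b : ℝ) (hv : 3 * Real.sqrt 2 / 4 < v)
    (ha : 0 < a) (hb : 0 < b) :
    ∃! x : ℝ, x ∈ Set.Ioo 0 (π/2) ∧
      (sin x)^2 * (v - sin x) / ((cos x)^2 * (v - cos x)) = b / a := by
  have hr2 : (Real.sqrt 2)^2 = 2 := Real.sq_sqrt (by norm_num)
  have hr0 : 0 < Real.sqrt 2 := Real.sqrt_pos.mpr (by norm_num)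
  have hv1 : 1 < v := by nlinarith
  have hpi : 0 < π/2 := by positivity
  set G : ℝ → ℝ := fun x => (sin x)^2 * (v - sin x) / ((cos x)^2 * (v - cos x)) with hG
  -- basic facts on the interval
  have hsin : ∀ x ∈ Set.Ioo 0 (π/2), 0 < sin x := fun x hx =>
    Real.sin_pos_of_pos_of_lt_pi hx.1 (lt_trans hx.2 (by linarith [Real.pi_pos]))
  have hcos : ∀ x ∈ Set.Ioo 0 (π/2), 0 < cos x := fun x hx =>
    Real.cos_pos_of_mem_Ioo ⟨by linarith [hx.1, Real.pi_pos], hx.2⟩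
  have hcos1 : ∀ x : ℝ, cos x ≤ 1 := fun x => Real.cos_le_one x
  have hsin1 : ∀ x : ℝ, sin x ≤ 1 := fun x => Real.sin_le_one x
  -- strict monotonicity of G on Ioo 0 (π/2)
  have hderiv : ∀ x ∈ Set.Ioo 0 (π/2),
      HasDerivAt G ((sin x * cos x * (2*v - 3*sin x) * ((cos x)^2 * (v - cos x))
        - (sin x)^2 * (v - sin x) * (sin x * cos x * (3*cos x - 2*v)))
        / ((cos x)^2 * (v - cos x))^2) x := by
    intro x hx
    have hc := hcos x hx
    have hg_ne : (cos x)^2 * (v - cos x) ≠ 0 := by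
      have : 0 < (cos x)^2 * (v - cos x) := by
        apply mul_pos (by positivity)
        linarith [hcos1 x]
      exact ne_of_gt this
    have hs' := Real.hasDerivAt_sin x
    have hc' := Real.hasDerivAt_cos x
    have hf : HasDerivAt (fun y => (sin y)^2 * (v - sin y))
        (sin x * cos x * (2*v - 3*sin x)) x := by
      have : HasDerivAt (fun y => (sin y)^2 * (v - sin y)) (↑2 * sin x ^ (2 - 1) * cos x * (v - sin x) + sin x ^ 2 * (0 - cos x)) x := (hs'.pow 2).mul ((hasDerivAt_const x v).sub hs')
      convert this using 1
      norm_num; ring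
    have hg : HasDerivAt (fun y => (cos y)^2 * (v - cos y))
        (sin x * cos x * (3*cos x - 2*v)) x := by
      have : HasDerivAt (fun y => (cos y)^2 * (v - cos y)) (↑2 * cos x ^ (2 - 1) * -sin x * (v - cos x) + cos x ^ 2 * (0 - -sin x)) x := (hc'.pow 2).mul ((hasDerivAt_const x v).sub hc')
      convert this using 1
      norm_num; ring
    exact hf.div hg hg_ne
  have hmono : StrictMonoOn G (Set.Ioo 0 (π/2)) := by
    apply strictMonoOn_of_deriv_pos (convex_Ioo _ _)
    · intro x hx
      exact ((hderiv x hx).differentiableAt.differentiableWithinAt).continuousWithinAt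
    · intro x hx
      rw [interior_Ioo] at hx
      rw [(hderiv x hx).deriv]
      have hs := hsin x hx
      have hc := hcos x hx
      have h1 : (sin x)^2 + (cos x)^2 = 1 := Real.sin_sq_add_cos_sq x
      have hN := N_pos_aux v (sin x) (cos x) hv hs hc h1
      have hgpos : 0 < (cos x)^2 * (v - cos x) :=
        mul_pos (by positivity) (by linarith [hcos1 x])
      apply div_pos _ (by positivity)
      have : sin x * cos x * (2*v - 3*sin x) * ((cos x)^2 * (v - cos x))
          - (sin x)^2 * (v - sin x) * (sin x * cos x * (3*cos x - 2*v))
          = sin x * cos x * ((2*v - 3*sin x) * ((cos x)^2*(v - cos x))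
            + (2*v - 3*cos x) * ((sin x)^2*(v - sin x))) := by ring
      rw [this]
      exact mul_pos (mul_pos hs hc) hN
  -- existence via IVT on F
  set F : ℝ → ℝ := fun x => a * ((sin x)^2 * (v - sin x)) - b * ((cos x)^2 * (v - cos x))
    with hF
  have hFc : ContinuousOn F (Set.Icc 0 (π/2)) := by fun_prop
  have hF0 : F 0 = -(b * (v - 1)) := by simp [hF]
  have hFpi : F (π/2) = a * (v - 1) := by simp [hF]
  have hmem : (0:ℝ) ∈ Set.Ioo (F 0) (F (π/2)) := by
    rw [hF0, hFpi]
    constructor <;> nlinarith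
  obtain ⟨x, hx, hFx⟩ := intermediate_value_Ioo (le_of_lt hpi) hFc hmem
  have hGx : G x = b / a := by
    have hs := hsin x hx
    have hc := hcos x hx
    have hvc : 0 < v - cos x := by linarith [hcos1 x]
    have : a * ((sin x)^2 * (v - sin x)) = b * ((cos x)^2 * (v - cos x)) := by
      have := hFx; simp only [hF] at this; linarith
    rw [hG]
    field_simp
    linarith
  refine ⟨x, ⟨hx, hGx⟩, ?_⟩
  rintro y ⟨hy, hGy⟩
  exact hmono.injOn hy hx (hGy.trans hGx.symm)
end
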